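/- Let G be a connected finite simple graph on Fin n with strictly positive edge weights, and let L be its signed weighted Laplacian (which is then a standard positive semidefinite graph Laplacian). Fix two distinct vertices i ≠ j, let v : Fin n → ℝ satisfy L v = e_i - e_j (where e_i, e_j are standard basis vectors), and set r = v_i - v_j (the effective resistance between i and j). Let c > 0 and define the symmetric matrix J = c·(e_i - e_j)(e_i - e_j)ᵀ - L. Then: if c·r < 1, J is negative definite on mean-zero vectors, i.e. xᵀ J x < 0 for all nonzero x with ∑_k x_k = 0; and if c·r > 1, J has a strictly positive eigenvalue. -/

import Mathlib

open Matrix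

/-- The signed weighted Laplacian of a simple graph `G` on `Fin n` with real edge
weights `w` (with `w i j = w j i` on edges). -/
def signedLaplacian {n : ℕ} (G : SimpleGraph (Fin n)) [DecidableRel G.Adj]
    (w : Fin n → Fin n → ℝ) : Matrix (Fin n) (Fin n) ℝ :=
  fun i j =>
    if i = j then ∑ k ∈ G.neighborFinset i, w i k
    else if G.Adj i j then -w i j else 0

section Aux

variable {n : ℕ} (G : SimpleGraph (Fin n)) [DecidableRel G.Adj] (w : Fin n → Fin n → ℝ)

lemma lap_mulVec_apply (x : Fin n → ℝ) (a : Fin n) :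
    (signedLaplacian G w *ᵥ x) a = ∑ b, if G.Adj a b then w a b * (x a - x b) else 0 := by
  have hD : ∑ k ∈ G.neighborFinset a, w a k = ∑ b, if G.Adj a b then w a b else 0 := by
    rw [SimpleGraph.neighborFinset_eq_filter, Finset.sum_filter]
  calc (signedLaplacian G w *ᵥ x) a
      = ∑ b, (signedLaplacian G w a b) * x b := rfl
    _ = ∑ b, ((if a = b then (∑ k, if G.Adj a k then w a k else 0) else 0) * x b
          + (if G.Adj a b then -(w a b) else 0) * x b) := by
        refine Finset.sum_congr rfl fun b _ => ?_
        by_cases hab : a = b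
        · subst hab; simp [signedLaplacian, hD, G.irrefl]
        · simp [signedLaplacian, hab]
    _ = (∑ k, if G.Adj a k then w a k else 0) * x a
          + ∑ b, (if G.Adj a b then -(w a b) else 0) * x b := by
        rw [Finset.sum_add_distrib]
        congr 1
        simp [Finset.sum_ite_eq]
    _ = ∑ b, if G.Adj a b then w a b * (x a - x b) else 0 := by
        rw [Finset.sum_mul, ← Finset.sum_add_distrib]
        refine Finset.sum_congr rfl fun b _ => by split_ifs <;> ring

lemma lap_symm_apply (hsymm : ∀ i j : Fin n, w i j = w j i) (a b : Fin n) :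
    signedLaplacian G w a b = signedLaplacian G w b a := by
  unfold signedLaplacian
  by_cases hab : a = b
  · subst hab; simp
  · have hba : ¬ b = a := fun h => hab h.symm
    by_cases h2 : G.Adj a b
    · simp [hab, hba, h2, h2.symm, hsymm a b]
    · have h3 : ¬ G.Adj b a := fun h => h2 h.symm
      simp [hab, hba, h2, h3]

lemma lap_dot_symm (hsymm : ∀ i j : Fin n, w i j = w j i) (x y : Fin n → ℝ) :
    y ⬝ᵥ (signedLaplacian G w *ᵥ x) = x ⬝ᵥ (signedLaplacian G w *ᵥ y) := by
  have hT : (signedLaplacian G w)ᵀ = signedLaplacian G w := by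
    ext a b; exact lap_symm_apply G w hsymm b a
  rw [Matrix.dotProduct_mulVec, ← Matrix.mulVec_transpose, hT, dotProduct_comm]

lemma lap_quad (hsymm : ∀ i j : Fin n, w i j = w j i) (x : Fin n → ℝ) :
    2 * (x ⬝ᵥ (signedLaplacian G w *ᵥ x))
      = ∑ a, ∑ b, if G.Adj a b then w a b * (x a - x b) ^ 2 else 0 := by
  have hQ : x ⬝ᵥ (signedLaplacian G w *ᵥ x)
      = ∑ a, ∑ b, if G.Adj a b then w a b * x a * (x a - x b) else 0 := by
    simp only [dotProduct, lap_mulVec_apply, Finset.mul_sum]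
    refine Finset.sum_congr rfl fun a _ => Finset.sum_congr rfl fun b _ => by
      split_ifs <;> ring
  have hQ' : x ⬝ᵥ (signedLaplacian G w *ᵥ x)
      = ∑ a, ∑ b, if G.Adj a b then w a b * x b * (x b - x a) else 0 := by
    rw [hQ, Finset.sum_comm]
    refine Finset.sum_congr rfl fun a _ => Finset.sum_congr rfl fun b _ => ?_
    by_cases hab : G.Adj a b
    · rw [if_pos hab.symm, if_pos hab, hsymm b a]
    · rw [if_neg (fun h => hab h.symm), if_neg hab]
  have : 2 * (x ⬝ᵥ (signedLaplacian G w *ᵥ x))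
      = (∑ a, ∑ b, if G.Adj a b then w a b * x a * (x a - x b) else 0)
        + ∑ a, ∑ b, if G.Adj a b then w a b * x b * (x b - x a) else 0 := by
    rw [← hQ, ← hQ']; ring
  rw [this, ← Finset.sum_add_distrib]
  refine Finset.sum_congr rfl fun a _ => ?_
  rw [← Finset.sum_add_distrib]
  refine Finset.sum_congr rfl fun b _ => by split_ifs <;> ring

lemma lap_quad_nonneg (hsymm : ∀ i j : Fin n, w i j = w j i)
    (hpos : ∀ i j : Fin n, G.Adj i j → 0 < w i j) (x : Fin n → ℝ) :
    0 ≤ x ⬝ᵥ (signedLaplacian G w *ᵥ x) := by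
  have h := lap_quad G w hsymm x
  have h2 : 0 ≤ ∑ a, ∑ b, if G.Adj a b then w a b * (x a - x b) ^ 2 else 0 := by
    refine Finset.sum_nonneg fun a _ => Finset.sum_nonneg fun b _ => ?_
    split_ifs with hab
    · exact mul_nonneg (hpos a b hab).le (sq_nonneg _)
    · exact le_rfl
  linarith

lemma lap_quad_zero_const (hconn : G.Connected) (hsymm : ∀ i j : Fin n, w i j = w j i)
    (hpos : ∀ i j : Fin n, G.Adj i j → 0 < w i j) (x : Fin n → ℝ)
    (h0 : x ⬝ᵥ (signedLaplacian G w *ᵥ x) = 0) : ∀ a b : Fin n, x a = x b := by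
  have h := lap_quad G w hsymm x
  rw [h0, mul_zero] at h
  have hterm : ∀ a b : Fin n, G.Adj a b → x a = x b := by
    intro a b hab
    have houter := (Finset.sum_eq_zero_iff_of_nonneg (fun a (_ : a ∈ Finset.univ) =>
      Finset.sum_nonneg fun b _ => by
        split_ifs with h'
        · exact mul_nonneg (hpos a b h').le (sq_nonneg _)
        · exact le_rfl)).mp h.symm a (Finset.mem_univ a)
    have hinner := (Finset.sum_eq_zero_iff_of_nonneg (fun b (_ : b ∈ Finset.univ) => by
        split_ifs with h'
        · exact mul_nonneg (hpos a b h').le (sq_nonneg _)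
        · exact le_rfl)).mp houter b (Finset.mem_univ b)
    rw [if_pos hab] at hinner
    have hw := hpos a b hab
    have h4 : (x a - x b) ^ 2 = 0 :=
      (mul_eq_zero.mp hinner).resolve_left (ne_of_gt hw)
    have h5 := sq_eq_zero_iff.mp h4
    linarith [sub_eq_zero.mp h5]
  intro a b
  obtain ⟨p⟩ := hconn a b
  induction p with
  | nil => rfl
  | cons hadj _ ih => exact (hterm _ _ hadj).trans ih

end Aux

/-- If a real symmetric matrix has a vector with positive Rayleigh quotient, it has a
positive eigenvalue. -/
lemma exists_pos_eigen {m : ℕ} (A : Matrix (Fin m) (Fin m) ℝ) (hA : A.IsHermitian)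
    (z : Fin m → ℝ) (hz : 0 < z ⬝ᵥ (A *ᵥ z)) :
    ∃ μ : ℝ, 0 < μ ∧ ∃ y : Fin m → ℝ, y ≠ 0 ∧ A *ᵥ y = μ • y := by
  by_contra hcon
  push_neg at hcon
  have hev : ∀ k, hA.eigenvalues k ≤ 0 := by
    intro k
    by_contra hk
    push_neg at hk
    have hnz : ⇑(hA.eigenvectorBasis k) ≠ (0 : Fin m → ℝ) := by
      intro h0
      exact hA.eigenvectorBasis.orthonormal.ne_zero k (by ext l; exact congrFun h0 l)
    exact hcon _ hk _ hnz (hA.mulVec_eigenvectorBasis k)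
  set U : Matrix (Fin m) (Fin m) ℝ := (hA.eigenvectorUnitary : Matrix (Fin m) (Fin m) ℝ) with hU
  have hd : (RCLike.ofReal ∘ hA.eigenvalues : Fin m → ℝ) = hA.eigenvalues := by
    funext k; simp
  have hdecomp := hA.spectral_theorem
  set y := star U *ᵥ z with hy
  have hcalc : z ⬝ᵥ (A *ᵥ z) = ∑ k, hA.eigenvalues k * (y k) ^ 2 := by
    conv_lhs => rw [hdecomp, Unitary.conjStarAlgAut_apply]
    rw [← Matrix.mulVec_mulVec, ← Matrix.mulVec_mulVec, Matrix.dotProduct_mulVec]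
    have hvm : z ᵥ* U = y := by
      rw [hy, ← Matrix.mulVec_transpose,
        ← Matrix.conjTranspose_eq_transpose_of_trivial]
      rfl
    rw [hvm, hd]
    simp only [dotProduct, Matrix.mulVec_diagonal]
    exact Finset.sum_congr rfl fun k _ => by ring
  rw [hcalc] at hz
  have : ∑ k, hA.eigenvalues k * (y k) ^ 2 ≤ 0 := by
    refine Finset.sum_nonpos fun k _ => ?_
    have := sq_nonneg (y k)
    nlinarith [hev k]
  linarith

/-- Effective-resistance stability criterion for a single positive edge:
for J = c(e_i - e_j)(e_i - e_j)ᵀ - L with L the Laplacian of a connected positively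
weighted graph, c > 0, and r = v_i - v_j the effective resistance (L v = e_i - e_j),
c·r < 1 implies J is negative definite on mean-zero vectors, and c·r > 1 implies J
has a strictly positive eigenvalue. -/
theorem one_positive_edge_resistance_criterion (n : ℕ)
    (G : SimpleGraph (Fin n)) [DecidableRel G.Adj] (hconn : G.Connected)
    (w : Fin n → Fin n → ℝ) (hsymm : ∀ i j : Fin n, w i j = w j i)
    (hpos : ∀ i j : Fin n, G.Adj i j → 0 < w i j)
    (i j : Fin n) (hij : i ≠ j)
    (v : Fin n → ℝ)
    (hv : (signedLaplacian G w).mulVec v = Pi.single i 1 - Pi.single j 1)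
    (c : ℝ) (hc : 0 < c) :
    (c * (v i - v j) < 1 →
      ∀ x : Fin n → ℝ, x ≠ 0 → ∑ k, x k = 0 →
        x ⬝ᵥ (c • vecMulVec (Pi.single i 1 - Pi.single j 1) (Pi.single i 1 - Pi.single j 1)
              - signedLaplacian G w).mulVec x < 0) ∧
    (1 < c * (v i - v j) →
      ∃ μ : ℝ, 0 < μ ∧ ∃ z : Fin n → ℝ, z ≠ 0 ∧
        (c • vecMulVec (Pi.single i 1 - Pi.single j 1) (Pi.single i 1 - Pi.single j 1)
              - signedLaplacian G w).mulVec z = μ • z) := by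
  set L := signedLaplacian G w with hL
  set u : Fin n → ℝ := Pi.single i 1 - Pi.single j 1 with hu
  set J := c • vecMulVec u u - L with hJ
  -- basic dot product facts
  have hudot : ∀ x : Fin n → ℝ, u ⬝ᵥ x = x i - x j := by
    intro x
    rw [hu, sub_dotProduct, single_dotProduct, single_dotProduct]
    ring
  have hdotu : ∀ x : Fin n → ℝ, x ⬝ᵥ u = x i - x j := by
    intro x; rw [dotProduct_comm]; exact hudot x
  -- J quadratic form
  have hvmv : ∀ x : Fin n → ℝ, vecMulVec u u *ᵥ x = (u ⬝ᵥ x) • u := by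
    intro x
    funext a
    show ∑ b, (u a * u b) * x b = (∑ b, u b * x b) * u a
    rw [Finset.sum_mul]
    exact Finset.sum_congr rfl fun b _ => by ring
  have hJquad : ∀ x : Fin n → ℝ,
      x ⬝ᵥ (J *ᵥ x) = c * (x i - x j) ^ 2 - x ⬝ᵥ (L *ᵥ x) := by
    intro x
    rw [hJ, Matrix.sub_mulVec, Matrix.smul_mulVec, dotProduct_sub,
      dotProduct_smul, hvmv, dotProduct_smul, hdotu, hudot]
    simp only [smul_eq_mul]
    ring
  -- r := v i - v j equals vᵀ L v
  have hrquad : v ⬝ᵥ (L *ᵥ v) = v i - v j := by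
    rw [hv, dotProduct_sub, dotProduct_single, dotProduct_single]
    ring
  have hn : 0 < n := i.pos
  -- r > 0
  have hrpos : 0 < v i - v j := by
    rcases lt_or_eq_of_le (lap_quad_nonneg G w hsymm hpos v) with h | h
    · rwa [hrquad] at h
    · exfalso
      have hconst := lap_quad_zero_const G w hconn hsymm hpos v h.symm
      have : (L *ᵥ v) i = 0 := by
        rw [hL, lap_mulVec_apply]
        refine Finset.sum_eq_zero fun b _ => ?_
        split_ifs with hab
        · rw [hconst i b]; ring
        · rfl
      rw [hv, hu] at this
      simp only [Pi.sub_apply, Pi.single_eq_same, Pi.single_eq_of_ne hij] at this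
      norm_num at this
  constructor
  · -- Part 1: c r < 1
    intro hlt x hx0 hsum
    set q := x ⬝ᵥ (L *ᵥ x) with hq
    set s := x i - x j with hs
    set r := v i - v j with hr
    have hq0 : 0 ≤ q := lap_quad_nonneg G w hsymm hpos x
    have hqpos : 0 < q := by
      rcases lt_or_eq_of_le hq0 with h | h
      · exact h
      · exfalso
        have hconst := lap_quad_zero_const G w hconn hsymm hpos x h.symm
        apply hx0
        funext a
        have : ∑ k, x k = (n : ℝ) * x a := by
          rw [Finset.sum_congr rfl fun k _ => hconst k a]
          simp [Finset.card_univ, mul_comm]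
        rw [hsum] at this
        have hne : (n : ℝ) ≠ 0 := Nat.cast_ne_zero.mpr hn.ne'
        have := (mul_eq_zero.mp this.symm).resolve_left hne
        simpa using this
    -- Cauchy-Schwarz: s^2 ≤ r * q
    have hcs : s ^ 2 ≤ r * q := by
      set y : Fin n → ℝ := r • x - s • v with hy
      have hynn : 0 ≤ y ⬝ᵥ (L *ᵥ y) := lap_quad_nonneg G w hsymm hpos y
      have hexp : y ⬝ᵥ (L *ᵥ y) = r * (r * q) - 2 * (r * (s * s)) + s * (s * r) := by
        rw [hy, Matrix.mulVec_sub, Matrix.mulVec_smul, Matrix.mulVec_smul,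
          sub_dotProduct, smul_dotProduct, smul_dotProduct,
          dotProduct_sub, dotProduct_sub,
          dotProduct_smul, dotProduct_smul,
          dotProduct_smul, dotProduct_smul]
        have h1 : x ⬝ᵥ (L *ᵥ v) = s := by rw [hv, hdotu]
        have h2 : v ⬝ᵥ (L *ᵥ x) = s := by rw [lap_dot_symm G w hsymm]; exact h1
        have h3 : v ⬝ᵥ (L *ᵥ v) = r := hrquad
        rw [h1, h2, h3]
        simp only [smul_eq_mul, ← hq]
        ring
      rw [hexp] at hynn
      nlinarith [hrpos]
    rw [hJquad x, ← hs, ← hq]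
    nlinarith [mul_le_mul_of_nonneg_left hcs hc.le, mul_lt_mul_of_pos_right hlt hqpos]
  · -- Part 2: c r > 1
    intro hgt
    set r := v i - v j with hr
    have hvJv : 0 < v ⬝ᵥ (J *ᵥ v) := by
      rw [hJquad v, hrquad, ← hr]
      nlinarith [hrpos]
    have hJherm : J.IsHermitian := by
      refine Matrix.IsHermitian.ext fun a b => ?_
      rw [star_trivial]
      show c * (u b * u a) - signedLaplacian G w b a
          = c * (u a * u b) - signedLaplacian G w a b
      rw [lap_symm_apply G w hsymm b a]
      ring
    exact exists_pos_eigen J hJherm v hvJv
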